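/- Let (W,S) be a finite Coxeter system, I,J ⊆ S and s ∈ I∖J. If there exists t ∈ J∖I with ord(st) = 2, then X_{IJ}^s = 0 in Ω(W,S). Consequently X_{IJ}^s ≠ 0 implies that I ← J is an edge of the compatibility graph Q_W. -/

import Mathlib

open scoped TensorProduct

noncomputable section

namespace WGraphPaper

variable (k : Type*) [CommRing k] {B B₁ B₂ : Type*}

/-! ### Gyoja's W-graph algebra with coefficients in `k`
(`Omega ℤ M` is the W-graph algebra `Ω(W,S)` itself, `Omega k M` is `kΩ`). -/

/-- The free ring `k⟨e_b, x_b | b ∈ B⟩`; `Sum.inl b` encodes the generator `e_b` and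
`Sum.inr b` encodes the generator `x_b`. -/
abbrev FreeGen (B : Type*) := FreeAlgebra k (B ⊕ B)

def eGen (b : B) : FreeGen k B := FreeAlgebra.ι k (Sum.inl b)
def xGen (b : B) : FreeGen k B := FreeAlgebra.ι k (Sum.inr b)

/-- `altProd a b n` is the alternating product `a * b * a * ⋯` with `n` factors. -/
def altProd {A : Type*} [Monoid A] : A → A → ℕ → A
  | _, _, 0 => 1
  | a, b, n + 1 => a * altProd b a n

/-- The braid commutator `Δ_m(a,b) = (a b a ⋯) - (b a b ⋯)` (`m` factors each). -/
def braidComm {A : Type*} [Ring A] (m : ℕ) (a b : A) : A := altProd a b m - altProd b a m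

/-- `ι(T_b) = -v⁻¹ e_b + v (1 - e_b) + x_b`, an element of `(FreeGen k B)[v,v⁻¹]`. -/
def iotaT (b : B) : LaurentPolynomial (FreeGen k B) :=
  LaurentPolynomial.C (-(eGen k b)) * LaurentPolynomial.T (-1)
    + LaurentPolynomial.C (1 - eGen k b) * LaurentPolynomial.T 1
    + LaurentPolynomial.C (xGen k b)

/-- The coefficient of `v^n` in a Laurent polynomial. -/
def lcoeff {R : Type*} [Semiring R] (p : LaurentPolynomial R) (n : ℤ) : R :=
  p.coeff n

/-- The defining relations of Gyoja's W-graph algebra: the relations (a) and (b) together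
with the vanishing of all Laurent coefficients `y^γ(s,t)` of the braid commutators
`Δ_{m_{st}}(ι(T_s), ι(T_t))` (for `m_{st} < ∞`, i.e. `M s t ≠ 0`). -/
inductive OmegaRel (M : CoxeterMatrix B) : FreeGen k B → FreeGen k B → Prop
  | e_idem (b : B) : OmegaRel M (eGen k b * eGen k b) (eGen k b)
  | e_comm (b b' : B) : OmegaRel M (eGen k b * eGen k b') (eGen k b' * eGen k b)
  | ex (b : B) : OmegaRel M (eGen k b * xGen k b) (xGen k b)
  | xe (b : B) : OmegaRel M (xGen k b * eGen k b) 0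
  | braid (b b' : B) (h : M b b' ≠ 0) (γ : ℤ) :
      OmegaRel M (lcoeff (braidComm (M b b') (iotaT k b) (iotaT k b')) γ) 0

/-- Gyoja's W-graph algebra `Ω(W,S)` (for `k = ℤ`), resp. `kΩ(W,S)`, defined from
the Coxeter matrix of `(W,S)`. -/
abbrev Omega (M : CoxeterMatrix B) := RingQuot (OmegaRel k M)

/-- The image of the generator `e_b` in `Ω`. -/
def eOm (M : CoxeterMatrix B) (b : B) : Omega k M :=
  RingQuot.mkRingHom (OmegaRel k M) (eGen k b)

/-- The image of the generator `x_b` in `Ω`. -/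
def xOm (M : CoxeterMatrix B) (b : B) : Omega k M :=
  RingQuot.mkRingHom (OmegaRel k M) (xGen k b)

lemma commute_eOm (M : CoxeterMatrix B) (b b' : B) : Commute (eOm k M b) (eOm k M b') := by
  show _ = _
  rw [eOm, eOm, ← map_mul, ← map_mul]
  exact RingQuot.mkRingHom_rel (OmegaRel.e_comm b b')

lemma commute_oneSubEOm (M : CoxeterMatrix B) (b b' : B) :
    Commute (1 - eOm k M b) (1 - eOm k M b') :=
  (Commute.one_left _).sub_left ((Commute.one_right _).sub_right (commute_eOm k M b b'))

variable [Fintype B] [DecidableEq B] [DecidableEq B₁] [DecidableEq B₂]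

/-- The idempotent `E_I = (∏_{t ∈ I} e_t) (∏_{t ∈ S∖I} (1 - e_t))`. -/
def EOm (M : CoxeterMatrix B) (I : Finset B) : Omega k M :=
  (I.noncommProd (fun b => eOm k M b) (fun _ _ _ _ _ => commute_eOm k M _ _)) *
    ((Iᶜ).noncommProd (fun b => 1 - eOm k M b) (fun _ _ _ _ _ => commute_oneSubEOm k M _ _))

/-- The edge element `X_{IJ}^s = E_I x_s E_J`. -/
def XOm (M : CoxeterMatrix B) (I J : Finset B) (s : B) : Omega k M :=
  EOm k M I * xOm k M s * EOm k M J

/-- `I ← J` is an edge of the compatibility graph `Q_W`: `I ∖ J ≠ ∅` and no element of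
`I ∖ J` commutes (in `W`, i.e. `m_{st} = 2`) with an element of `J ∖ I`. -/
def QEdge (M : CoxeterMatrix B) (I J : Finset B) : Prop :=
  (I \ J).Nonempty ∧ ∀ s ∈ I \ J, ∀ t ∈ J \ I, M s t ≠ 2

/-- `I ⇆ J`: `I` and `J` are joined by a pair of transversal edges of `Q_W`. -/
def Transversal (M : CoxeterMatrix B) (I J : Finset B) : Prop :=
  QEdge M I J ∧ (J \ I).Nonempty

/-- The generators of the subalgebra `Ψ(W,S)`: all `E_I` and all transversal edge
elements `X_{IJ}`. -/
def psiGens (M : CoxeterMatrix B) : Set (Omega k M) :=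
  {a | ∃ I : Finset B, a = EOm k M I} ∪
    {a | ∃ I J : Finset B, ∃ s : B, Transversal M I J ∧ s ∈ I \ J ∧ a = XOm k M I J s}

/-- The subring `Ψ(W,S) ⊆ Ω(W,S)` generated by all `E_I` and all transversal edges. -/
def Psi (M : CoxeterMatrix B) : Subring (Omega k M) := Subring.closure (psiGens k M)

/-- The subalgebra `kΨ(W,S) ⊆ kΩ(W,S)` generated by all `E_I` and all transversal edges. -/
def PsiAlg (M : CoxeterMatrix B) : Subalgebra k (Omega k M) :=
  Algebra.adjoin k (psiGens k M)

/-! ### Products of Coxeter systems -/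

/-- The Coxeter matrix of the product `W₁ × W₂`, on `S = S₁ ⊔ S₂` (each element of `S₁`
commutes with each element of `S₂`). -/
def prodMatrix (M₁ : CoxeterMatrix B₁) (M₂ : CoxeterMatrix B₂) : CoxeterMatrix (B₁ ⊕ B₂) where
  M i j :=
    match i, j with
    | Sum.inl a, Sum.inl b => M₁ a b
    | Sum.inr a, Sum.inr b => M₂ a b
    | _, _ => 2
  isSymm := by
    unfold Matrix.IsSymm
    ext i j
    rcases i with a | a <;> rcases j with b | b <;>
      simp only [Matrix.transpose_apply] <;>
      first
        | exact M₁.symmetric b a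
        | exact M₂.symmetric b a
        | rfl
  diagonal i := by rcases i with a | a <;> simp [CoxeterMatrix.diagonal]
  off_diagonal i j h := by
    rcases i with a | a <;> rcases j with b | b
    · exact M₁.off_diagonal a b (by rintro rfl; exact h rfl)
    · simp
    · simp
    · exact M₂.off_diagonal a b (by rintro rfl; exact h rfl)

def inlEmb : B₁ ↪ B₁ ⊕ B₂ := ⟨Sum.inl, Sum.inl_injective⟩
def inrEmb : B₂ ↪ B₁ ⊕ B₂ := ⟨Sum.inr, Sum.inr_injective⟩

/-- The subset `I ⊔ K` of `S = S₁ ⊔ S₂`, for `I ⊆ S₁` and `K ⊆ S₂`. -/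
def fjoin (I : Finset B₁) (K : Finset B₂) : Finset (B₁ ⊕ B₂) :=
  I.map inlEmb ∪ K.map inrEmb

/-- The part `I₁ = I ∩ S₁` of a subset `I ⊆ S = S₁ ⊔ S₂`. -/
def part1 (I : Finset (B₁ ⊕ B₂)) : Finset B₁ :=
  I.preimage Sum.inl Sum.inl_injective.injOn

/-- The part `I₂ = I ∩ S₂` of a subset `I ⊆ S = S₁ ⊔ S₂`. -/
def part2 (I : Finset (B₁ ⊕ B₂)) : Finset B₂ :=
  I.preimage Sum.inr Sum.inr_injective.injOn

variable (M₁ : CoxeterMatrix B₁) (M₂ : CoxeterMatrix B₂)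

/-- `f` is the parabolic morphism `ι₁ : Ω₁ → Ω` (it sends `e_s ↦ e_s`, `x_s ↦ x_s`
for `s ∈ S₁`). -/
def Parab1Cond (f : Omega k M₁ → Omega k (prodMatrix M₁ M₂)) : Prop :=
  ∀ b : B₁, f (eOm k M₁ b) = eOm k (prodMatrix M₁ M₂) (Sum.inl b) ∧
    f (xOm k M₁ b) = xOm k (prodMatrix M₁ M₂) (Sum.inl b)

/-- `f` is the parabolic morphism `ι₂ : Ω₂ → Ω` (it sends `e_s ↦ e_s`, `x_s ↦ x_s`
for `s ∈ S₂`). -/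
def Parab2Cond (f : Omega k M₂ → Omega k (prodMatrix M₁ M₂)) : Prop :=
  ∀ b : B₂, f (eOm k M₂ b) = eOm k (prodMatrix M₁ M₂) (Sum.inr b) ∧
    f (xOm k M₂ b) = xOm k (prodMatrix M₁ M₂) (Sum.inr b)

/-- `t` is the morphism `τ : Ω → Ω₁ ⊗ Ω₂` of the paper: it sends `e_s ↦ e_s ⊗ 1`,
`x_s ↦ x_s ⊗ 1` for `s ∈ S₁` and `e_s ↦ 1 ⊗ e_s`, `x_s ↦ 1 ⊗ x_s` for `s ∈ S₂`. -/
def TauCond (t : Omega k (prodMatrix M₁ M₂) → Omega k M₁ ⊗[k] Omega k M₂) : Prop :=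
  (∀ b : B₁, t (eOm k (prodMatrix M₁ M₂) (Sum.inl b)) = eOm k M₁ b ⊗ₜ[k] 1 ∧
      t (xOm k (prodMatrix M₁ M₂) (Sum.inl b)) = xOm k M₁ b ⊗ₜ[k] 1) ∧
  (∀ b : B₂, t (eOm k (prodMatrix M₁ M₂) (Sum.inr b)) = 1 ⊗ₜ[k] eOm k M₂ b ∧
      t (xOm k (prodMatrix M₁ M₂) (Sum.inr b)) = 1 ⊗ₜ[k] xOm k M₂ b)



/-- The coefficientwise extension of a ring homomorphism to Laurent polynomial rings. -/
def laurentMap {R A : Type*} [Semiring R] [Semiring A] (f : R →+* A) :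
    LaurentPolynomial R →+* LaurentPolynomial A :=
  AddMonoidAlgebra.liftNCRingHom (LaurentPolynomial.C.comp f)
    { toFun := fun n => LaurentPolynomial.T (Multiplicative.toAdd n)
      map_one' := LaurentPolynomial.T_zero
      map_mul' := fun _ _ => LaurentPolynomial.T_add _ _ }
    (fun _ n => (LaurentPolynomial.commute_T (Multiplicative.toAdd n) _).symm)

/-- `k` is a good ring for `(W,S)`: it contains `2cos(2π/m_{st})` for all `s,t ∈ S`. -/
def GoodRing (M : CoxeterMatrix B) (k : Subring ℂ) : Prop :=
  ∀ i j : B, M i j ≠ 0 → (2 * Complex.cos (2 * Real.pi / (M i j : ℂ))) ∈ k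

/-- The irreducible complex characters of a finite group `G`. -/
def IrrChar (G : Type) [Group G] : Type :=
  {χ : G → ℂ // ∃ V : FDRep ℂ G, CategoryTheory.Simple V ∧ χ = FDRep.character V}

/-- The degree `d_λ` of an irreducible character `λ` (its value at `1`). -/
def IrrChar.degree {G : Type} [Group G] (χ : IrrChar G) : ℕ := ⌊(χ.val 1).re⌋₊

variable {ι : Type*}

/-- (Z1): the `F^λ` are a decomposition of the identity into orthogonal idempotents. -/
def Z1 {A : Type*} [Ring A] (F : ι → A) : Prop :=
  (∀ l, F l * F l = F l) ∧ (∀ l m, l ≠ m → F l * F m = 0) ∧ ∑ᶠ l, F l = 1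

variable [Fintype B] [DecidableEq B]

/-- (Z2): the decomposition is compatible with the one coming from the path-algebra
structure: `E_I F^λ = F^λ E_I`. -/
def Z2 (M : CoxeterMatrix B) (F : ι → Omega k M) : Prop :=
  ∀ l (I : Finset B), EOm k M I * F l = F l * EOm k M I

/-- (Z3), with a specified partial order `le`: only "downward edges" exist,
i.e. `F^λ Ω F^μ ≠ 0 → λ ⪯ μ`. -/
def Z3At {A : Type*} [Ring A] (F : ι → A) (le : ι → ι → Prop) : Prop :=
  ∀ l m, (∃ a : A, F l * a * F m ≠ 0) → le l m

/-- (Z3): there is a partial order on `Irr(W)` such that only "downward edges" exist. -/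
def Z3 {A : Type*} [Ring A] (F : ι → A) : Prop :=
  ∃ le : ι → ι → Prop, IsPartialOrder ι le ∧ Z3At F le

/-- (Z4): there are surjective `k`-algebra morphisms `k^{d_λ×d_λ} ↠ F^λ kΩ F^λ`. -/
def Z4 (M : CoxeterMatrix B) (F : ι → Omega k M) (d : ι → ℕ) : Prop :=
  ∀ l, ∃ ψ : Matrix (Fin (d l)) (Fin (d l)) k →ₗ[k] Omega k M,
    (∀ x y, ψ (x * y) = ψ x * ψ y) ∧ ψ 1 = F l ∧
      Set.range ψ = {z | ∃ a : Omega k M, z = F l * a * F l}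

/-- (Z5): `F^λ X_{IJ} F^λ ∈ kΨ(W,S)` for all edges `I ← J` of `Q_W`. -/
def Z5 (M : CoxeterMatrix B) (F : ι → Omega k M) : Prop :=
  ∀ l (I J : Finset B) (s : B), QEdge M I J → s ∈ I \ J →
    F l * XOm k M I J s * F l ∈ PsiAlg k M

/-- (Z6): `F^λ ∈ kΨ(W,S)`. -/
def Z6 (M : CoxeterMatrix B) (F : ι → Omega k M) : Prop :=
  ∀ l, F l ∈ PsiAlg k M

/-- The family satisfies all of (Z1)–(Z6), i.e. the strong W-graph decomposition
conjecture holds via this family (`d` is the degree function on `Irr(W)`). -/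
def StrongZ (M : CoxeterMatrix B) (F : ι → Omega k M) (d : ι → ℕ) : Prop :=
  Z1 F ∧ Z2 k M F ∧ Z3 F ∧ Z4 k M F d ∧ Z5 k M F ∧ Z6 k M F

/-- The maximal length (number of steps) of a strict chain for the relation `le`. -/
def orderHeight (le : ι → ι → Prop) : ℕ :=
  sSup {n | ∃ c : Fin (n + 1) → ι, Function.Injective c ∧
    ∀ i j : Fin (n + 1), i < j → le (c i) (c j)}



/-! ### Auxiliary development for statement2 -/

section Statement2Aux

open LaurentPolynomial

variable {R : Type*} [Ring R]

lemma lcoeff_add (p q : LaurentPolynomial R) (n : ℤ) :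
    lcoeff (p + q) n = lcoeff p n + lcoeff q n := rfl

lemma lcoeff_sub (p q : LaurentPolynomial R) (n : ℤ) :
    lcoeff (p - q) n = lcoeff p n - lcoeff q n := rfl

lemma lcoeff_one (n : ℤ) : lcoeff (1 : LaurentPolynomial R) n = if n = 0 then 1 else 0 := by
  have h1 : (1 : LaurentPolynomial R) = LaurentPolynomial.C 1 := (map_one _).symm
  rw [lcoeff, h1, LaurentPolynomial.C_apply]

lemma lcoeff_C_T_mul (r : R) (x : ℤ) (f : LaurentPolynomial R) (y : ℤ) :
    lcoeff (LaurentPolynomial.C r * LaurentPolynomial.T x * f) y = r * lcoeff f (y - x) := by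
  rw [← single_eq_C_mul_T, sub_eq_neg_add]
  exact AddMonoidAlgebra.coeff_single_mul_apply f r x y

lemma lcoeff_iotaT_mul (b : B) (p : LaurentPolynomial (FreeGen k B)) (n : ℤ) :
    lcoeff (iotaT k b * p) n
      = -(eGen k b) * lcoeff p (n + 1) + (1 - eGen k b) * lcoeff p (n - 1)
        + xGen k b * lcoeff p n := by
  have h0 : (LaurentPolynomial.C (xGen k b) : LaurentPolynomial (FreeGen k B))
      = LaurentPolynomial.C (xGen k b) * LaurentPolynomial.T 0 := by
    rw [T_zero, mul_one]
  rw [iotaT, h0, add_mul, add_mul, lcoeff_add, lcoeff_add,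
    lcoeff_C_T_mul, lcoeff_C_T_mul, lcoeff_C_T_mul, sub_neg_eq_add, sub_zero]

lemma altProd_succ {A : Type*} [Monoid A] (a b : A) (n : ℕ) :
    altProd a b (n + 1) = a * altProd b a n := rfl

lemma lcoeff_altProd_eq_zero (m : ℕ) :
    ∀ (b b' : B) (n : ℤ), (m : ℤ) < n →
      lcoeff (altProd (iotaT k b) (iotaT k b') m) n = 0 := by
  induction m with
  | zero =>
      intro b b' n hn
      show lcoeff (1 : LaurentPolynomial (FreeGen k B)) n = 0
      rw [lcoeff_one, if_neg (by omega)]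
  | succ m ih =>
      intro b b' n hn
      rw [altProd_succ, lcoeff_iotaT_mul,
        ih b' b (n + 1) (by push_cast at hn ⊢; omega),
        ih b' b (n - 1) (by push_cast at hn ⊢; omega),
        ih b' b n (by push_cast at hn ⊢; omega)]
      simp

/-- `g`-sequence: top Laurent coefficient of the alternating product. -/
def gFG (b b' : B) (m : ℕ) : FreeGen k B :=
  lcoeff (altProd (iotaT k b) (iotaT k b') m) m

/-- `f`-sequence: sub-top Laurent coefficient of the alternating product. -/
def fFG (b b' : B) (m : ℕ) : FreeGen k B :=
  lcoeff (altProd (iotaT k b) (iotaT k b') m) ((m : ℤ) - 1)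

lemma gFG_zero (b b' : B) : gFG k b b' 0 = 1 := by
  show lcoeff (1 : LaurentPolynomial (FreeGen k B)) 0 = 1
  rw [lcoeff_one, if_pos rfl]

lemma gFG_succ (b b' : B) (m : ℕ) :
    gFG k b b' (m + 1) = (1 - eGen k b) * gFG k b' b m := by
  unfold gFG
  rw [altProd_succ, lcoeff_iotaT_mul]
  have h1 : ((m : ℤ) + 1) + 1 > (m : ℤ) := by omega
  have h2 : ((m : ℤ) + 1) > (m : ℤ) := by omega
  push_cast
  rw [lcoeff_altProd_eq_zero k m b' b _ h1, lcoeff_altProd_eq_zero k m b' b _ h2]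
  push_cast
  simp

lemma fFG_zero (b b' : B) : fFG k b b' 0 = 0 := by
  show lcoeff (1 : LaurentPolynomial (FreeGen k B)) ((0:ℤ) - 1) = 0
  rw [lcoeff_one, if_neg (by omega)]

lemma fFG_succ (b b' : B) (m : ℕ) :
    fFG k b b' (m + 1) = (1 - eGen k b) * fFG k b' b m + xGen k b * gFG k b' b m := by
  unfold fFG gFG
  rw [altProd_succ, lcoeff_iotaT_mul]
  have h1 : ((m : ℤ) + 1 - 1) + 1 > (m : ℤ) := by omega
  push_cast
  rw [lcoeff_altProd_eq_zero k m b' b _ h1]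
  have h2 : (m : ℤ) + 1 - 1 - 1 = (m : ℤ) - 1 := by omega
  have h3 : (m : ℤ) + 1 - 1 = (m : ℤ) := by omega
  rw [h2, h3]
  simp

end Statement2Aux


section OmegaAux

variable {B : Type*} [Fintype B] [DecidableEq B] (M : CoxeterMatrix B)

lemma eOm_mul_self (b : B) : eOm ℤ M b * eOm ℤ M b = eOm ℤ M b := by
  rw [eOm, ← map_mul]
  exact RingQuot.mkRingHom_rel (OmegaRel.e_idem b)

lemma eOm_mul_xOm (b : B) : eOm ℤ M b * xOm ℤ M b = xOm ℤ M b := by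
  rw [eOm, xOm, ← map_mul]
  exact RingQuot.mkRingHom_rel (OmegaRel.ex b)

lemma xOm_mul_eOm (b : B) : xOm ℤ M b * eOm ℤ M b = 0 := by
  rw [eOm, xOm, ← map_mul]
  rw [RingQuot.mkRingHom_rel (OmegaRel.xe b), map_zero]

lemma braid_coeff_zero (b b' : B) (h : M b b' ≠ 0) (γ : ℤ) :
    RingQuot.mkRingHom (OmegaRel ℤ M)
      (lcoeff (braidComm (M b b') (iotaT ℤ b) (iotaT ℤ b')) γ) = 0 := by
  rw [RingQuot.mkRingHom_rel (OmegaRel.braid b b' h γ), map_zero]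

/-- Images of the `f`-sequence in `Ω`. -/
def FOm (b b' : B) (m : ℕ) : Omega ℤ M := RingQuot.mkRingHom (OmegaRel ℤ M) (fFG ℤ b b' m)

/-- Images of the `g`-sequence in `Ω`. -/
def GOm (b b' : B) (m : ℕ) : Omega ℤ M := RingQuot.mkRingHom (OmegaRel ℤ M) (gFG ℤ b b' m)

lemma GOm_zero (b b' : B) : GOm M b b' 0 = 1 := by
  rw [GOm, gFG_zero, map_one]

lemma GOm_succ (b b' : B) (m : ℕ) :
    GOm M b b' (m + 1) = (1 - eOm ℤ M b) * GOm M b' b m := by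
  rw [GOm, gFG_succ, map_mul, map_sub, map_one, GOm, eOm]

lemma FOm_zero (b b' : B) : FOm M b b' 0 = 0 := by
  rw [FOm, fFG_zero, map_zero]

lemma FOm_succ (b b' : B) (m : ℕ) :
    FOm M b b' (m + 1)
      = (1 - eOm ℤ M b) * FOm M b' b m + xOm ℤ M b * GOm M b' b m := by
  rw [FOm, fFG_succ, map_add, map_mul, map_mul, map_sub, map_one, FOm, GOm, eOm, xOm]

lemma FOm_braid (b b' : B) (h : M b b' ≠ 0) :
    FOm M b b' (M b b') = FOm M b' b (M b b') := by
  have h2 := braid_coeff_zero M b b' h ((M b b' : ℤ) - 1)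
  rw [braidComm, lcoeff_sub, map_sub] at h2
  rw [FOm, FOm]
  exact sub_eq_zero.mp h2

lemma commute_eOm_EOm (b : B) (I : Finset B) : Commute (eOm ℤ M b) (EOm ℤ M I) := by
  rw [EOm]
  refine Commute.mul_right ?_ ?_
  · exact Finset.noncommProd_commute _ _ _ _ (fun b' _ => commute_eOm ℤ M b b')
  · exact Finset.noncommProd_commute _ _ _ _
      (fun b' _ => ((Commute.one_right _).sub_right (commute_eOm ℤ M b b')))

lemma EOm_mul_eOm_of_mem {b : B} {I : Finset B} (hb : b ∈ I) :
    EOm ℤ M I * eOm ℤ M b = EOm ℤ M I := by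
  rw [EOm]
  have h1 : I = insert b (I.erase b) := (Finset.insert_erase hb).symm
  rw [mul_assoc]
  have hcomm : (Iᶜ.noncommProd (fun b => 1 - eOm ℤ M b) fun _ _ _ _ _ =>
      commute_oneSubEOm ℤ M _ _) * eOm ℤ M b
      = eOm ℤ M b * Iᶜ.noncommProd (fun b => 1 - eOm ℤ M b) fun _ _ _ _ _ =>
      commute_oneSubEOm ℤ M _ _ :=
    (Finset.noncommProd_commute _ _ _ _
      (fun b' _ => ((Commute.one_right _).sub_right (commute_eOm ℤ M b b')))).symm
  rw [hcomm, ← mul_assoc]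
  congr 1
  conv_lhs => rw [h1]
  conv_rhs => rw [h1]
  erw [Finset.noncommProd_insert_of_notMem _ _ _ _ (Finset.notMem_erase b I)]
  have hc : Commute (eOm ℤ M b)
      ((I.erase b).noncommProd (fun b => eOm ℤ M b) fun _ _ _ _ _ => commute_eOm ℤ M _ _) :=
    Finset.noncommProd_commute _ _ _ _ (fun b' _ => commute_eOm ℤ M b b')
  rw [mul_assoc, ← hc.eq, ← mul_assoc, eOm_mul_self]

lemma EOm_mul_eOm_of_not_mem {b : B} {I : Finset B} (hb : b ∉ I) :
    EOm ℤ M I * eOm ℤ M b = 0 := by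
  rw [EOm]
  have hb' : b ∈ Iᶜ := Finset.mem_compl.mpr hb
  have h1 : Iᶜ = insert b (Iᶜ.erase b) := (Finset.insert_erase hb').symm
  conv_lhs => rw [h1]
  erw [Finset.noncommProd_insert_of_notMem _ _ _ _ (Finset.notMem_erase b Iᶜ)]
  have hc : Commute (eOm ℤ M b)
      ((Iᶜ.erase b).noncommProd (fun b => 1 - eOm ℤ M b)
        fun _ _ _ _ _ => commute_oneSubEOm ℤ M _ _) :=
    Finset.noncommProd_commute _ _ _ _
      (fun b' _ => ((Commute.one_right _).sub_right (commute_eOm ℤ M b b')))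
  rw [mul_assoc, mul_assoc, ← hc.eq, ← mul_assoc (1 - eOm ℤ M b), sub_mul, one_mul,
    eOm_mul_self, sub_self, zero_mul, mul_zero]

lemma eOm_mul_EOm_of_mem {b : B} {I : Finset B} (hb : b ∈ I) :
    eOm ℤ M b * EOm ℤ M I = EOm ℤ M I := by
  rw [(commute_eOm_EOm M b I).eq, EOm_mul_eOm_of_mem M hb]

lemma eOm_mul_EOm_of_not_mem {b : B} {I : Finset B} (hb : b ∉ I) :
    eOm ℤ M b * EOm ℤ M I = 0 := by
  rw [(commute_eOm_EOm M b I).eq, EOm_mul_eOm_of_not_mem M hb]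

lemma EOm_mul_oneSub_of_mem {b : B} {I : Finset B} (hb : b ∈ I) :
    EOm ℤ M I * (1 - eOm ℤ M b) = 0 := by
  rw [mul_sub, mul_one, EOm_mul_eOm_of_mem M hb, sub_self]

lemma oneSub_mul_EOm_of_not_mem {b : B} {J : Finset B} (hb : b ∉ J) :
    (1 - eOm ℤ M b) * EOm ℤ M J = EOm ℤ M J := by
  rw [sub_mul, one_mul, eOm_mul_EOm_of_not_mem M hb, sub_zero]

lemma GOm_mul_EOm {J : Finset B} :
    ∀ (m : ℕ) (b b' : B), b ∉ J → b' ∉ J → GOm M b b' m * EOm ℤ M J = EOm ℤ M J := by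
  intro m
  induction m with
  | zero => intro b b' _ _; rw [GOm_zero, one_mul]
  | succ m ih =>
      intro b b' hb hb'
      rw [GOm_succ, mul_assoc, ih b' b hb' hb, oneSub_mul_EOm_of_not_mem M hb]

lemma EOm_mul_FOm_mul_EOm {I J : Finset B} {b b' : B} (hbI : b ∈ I) (hbJ : b ∉ J)
    (hb'I : b' ∈ I) (hb'J : b' ∉ J) (m : ℕ) :
    EOm ℤ M I * FOm M b b' (m + 1) * EOm ℤ M J = EOm ℤ M I * xOm ℤ M b * EOm ℤ M J := by
  rw [FOm_succ, mul_add, add_mul, ← mul_assoc, EOm_mul_oneSub_of_mem M hbI,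
    zero_mul, zero_mul, zero_add, mul_assoc, mul_assoc, GOm_mul_EOm M m b' b hb'J hbJ,
    ← mul_assoc]

/-- The key `m = 2` relation: if `M a b = 2` then `x_a e_b = e_b x_a e_b` in `Ω`. -/
lemma xOm_mul_eOm_of_comm {a b : B} (h2 : M a b = 2) :
    xOm ℤ M a * eOm ℤ M b = eOm ℤ M b * (xOm ℤ M a * eOm ℤ M b) := by
  -- the coefficient of `v` in the braid commutator for the pair `(a, b)`
  have h0 : M a b ≠ 0 := by omega
  have hc := braid_coeff_zero M a b h0 1
  have hb1 : ∀ c : B, lcoeff (iotaT ℤ c) 2 = 0 := by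
    intro c
    have h := lcoeff_iotaT_mul ℤ c 1 2
    rw [mul_one] at h
    rw [h, lcoeff_one, lcoeff_one, lcoeff_one]
    norm_num
  have hb2 : ∀ c : B, lcoeff (iotaT ℤ c) 0 = xGen ℤ c := by
    intro c
    have h := lcoeff_iotaT_mul ℤ c 1 0
    rw [mul_one] at h
    rw [h, lcoeff_one, lcoeff_one, lcoeff_one]
    norm_num
  have hb3 : ∀ c : B, lcoeff (iotaT ℤ c) 1 = 1 - eGen ℤ c := by
    intro c
    have h := lcoeff_iotaT_mul ℤ c 1 1
    rw [mul_one] at h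
    rw [h, lcoeff_one, lcoeff_one, lcoeff_one]
    norm_num
  have hfg : lcoeff (braidComm (M a b) (iotaT ℤ a) (iotaT ℤ b)) 1
      = ((1 - eGen ℤ a) * xGen ℤ b + xGen ℤ a * (1 - eGen ℤ b))
        - ((1 - eGen ℤ b) * xGen ℤ a + xGen ℤ b * (1 - eGen ℤ a)) := by
    rw [h2]
    show lcoeff (iotaT ℤ a * (iotaT ℤ b * 1) - iotaT ℤ b * (iotaT ℤ a * 1)) 1 = _
    rw [mul_one, mul_one, lcoeff_sub, lcoeff_iotaT_mul, lcoeff_iotaT_mul]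
    norm_num
    rw [hb1, hb1, hb2, hb2, hb3, hb3]
    noncomm_ring
  rw [hfg] at hc
  simp only [map_sub, map_add, map_mul, map_one] at hc
  have hEe : ∀ c : B, RingQuot.mkRingHom (OmegaRel ℤ M) (eGen ℤ c) = eOm ℤ M c := fun _ => rfl
  have hXx : ∀ c : B, RingQuot.mkRingHom (OmegaRel ℤ M) (xGen ℤ c) = xOm ℤ M c := fun _ => rfl
  simp only [hEe, hXx] at hc
  set E := fun c => eOm ℤ M c with hE
  set X := fun c => xOm ℤ M c with hX
  have hR : (1 - E a) * X b + X a * (1 - E b) = (1 - E b) * X a + X b * (1 - E a) :=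
    sub_eq_zero.mp hc
  have hxb : X b * E b = 0 := xOm_mul_eOm M b
  have hee : (1 - E b) * E b = 0 := by
    show (1 - eOm ℤ M b) * eOm ℤ M b = 0
    rw [sub_mul, one_mul, eOm_mul_self, sub_self]
  have heba : E b * E a = E a * E b := (commute_eOm ℤ M b a).eq
  have hcomm' : (1 - E a) * E b = E b * (1 - E a) := by
    rw [sub_mul, mul_sub, one_mul, mul_one, heba]
  have h2 := congrArg (fun z => z * E b) hR
  simp only [add_mul, mul_assoc] at h2
  rw [hxb, mul_zero, hcomm', ← mul_assoc (X b), hxb, zero_mul, add_zero] at h2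
  rw [hee, mul_zero, zero_add] at h2
  -- h2 : 0 = (1 - E b) * (X a * E b)
  have h3 := h2.symm
  rw [sub_mul, one_mul, sub_eq_zero] at h3
  exact h3

lemma XOm_eq_zero_aux {I J : Finset B} {s' t : B} (hs'I : s' ∈ I) (hs'J : s' ∉ J)
    (htJ : t ∈ J) (htI : t ∉ I) (h2 : M s' t = 2) : XOm ℤ M I J s' = 0 := by
  have key := xOm_mul_eOm_of_comm M h2
  rw [XOm]
  simp only [mul_assoc]
  rw [← eOm_mul_EOm_of_mem M htJ, ← mul_assoc (xOm ℤ M s') (eOm ℤ M t) (EOm ℤ M J), key]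
  simp only [mul_assoc]
  rw [← mul_assoc (EOm ℤ M I) (eOm ℤ M t), EOm_mul_eOm_of_not_mem M htI, zero_mul]

lemma XOm_eq_of_pair {I J : Finset B} {s s' : B} (hsI : s ∈ I) (hsJ : s ∉ J)
    (hs'I : s' ∈ I) (hs'J : s' ∉ J) (hM : M s s' ≠ 0) :
    XOm ℤ M I J s = XOm ℤ M I J s' := by
  obtain ⟨m, hm⟩ : ∃ m, M s s' = m + 1 := ⟨M s s' - 1, by omega⟩
  have h1 := EOm_mul_FOm_mul_EOm M hsI hsJ hs'I hs'J m
  have h2 := EOm_mul_FOm_mul_EOm M hs'I hs'J hsI hsJ m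
  have hb := FOm_braid M s s' hM
  have hb' : FOm M s s' (m + 1) = FOm M s' s (m + 1) := by rw [← hm]; exact hb
  rw [XOm, XOm, ← h1, ← h2, hb']

end OmegaAux


section GeometricRep
set_option maxHeartbeats 1000000
set_option synthInstance.maxHeartbeats 400000

open Real

variable {B : Type*} [Fintype B] [DecidableEq B] (M : CoxeterMatrix B)

/-- The standard bilinear form coefficients `-cos (π / m_{ab})`. -/
def kcos (a b : B) : ℝ := - Real.cos (Real.pi / (M a b : ℝ))

lemma kcos_self (a : B) : kcos M a a = 1 := by
  rw [kcos, M.diagonal]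
  norm_num

lemma kcos_symm (a b : B) : kcos M a b = kcos M b a := by
  rw [kcos, kcos, M.symmetric a b]

/-- The basis vector `α_a`. -/
def alphaV (a : B) : B → ℝ := Pi.single a 1

/-- The linear functional `v ↦ ∑ p, k a p * v p`. -/
def fLin (a : B) : (B → ℝ) →ₗ[ℝ] ℝ :=
  ∑ p : B, kcos M a p • (LinearMap.proj p : (B → ℝ) →ₗ[ℝ] ℝ)

lemma fLin_apply (a : B) (v : B → ℝ) : fLin M a v = ∑ p : B, kcos M a p * v p := by
  simp [fLin]

lemma fLin_single (a b : B) : fLin M a (alphaV b) = kcos M a b := by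
  rw [fLin_apply]
  rw [Finset.sum_eq_single b]
  · simp [alphaV]
  · intro p _ hp
    rw [alphaV, Pi.single_eq_of_ne hp, mul_zero]
  · simp

/-- The reflection `σ_a`. -/
def sig (a : B) : Module.End ℝ (B → ℝ) :=
  LinearMap.id - (2 : ℝ) • ((fLin M a).smulRight (alphaV a))

lemma sig_apply (a : B) (v : B → ℝ) :
    sig M a v = v - (2 * fLin M a v) • alphaV a := by
  simp [sig, LinearMap.smulRight_apply, smul_smul]

lemma sig_fix {a : B} {v : B → ℝ} (h : fLin M a v = 0) : sig M a v = v := by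
  rw [sig_apply, h, mul_zero, zero_smul, sub_zero]

lemma fLin_sig (a : B) (v : B → ℝ) : fLin M a (sig M a v) = - fLin M a v := by
  rw [sig_apply, map_sub, map_smul, fLin_single, kcos_self]
  simp
  ring

lemma sig_sq (a : B) : sig M a * sig M a = 1 := by
  apply LinearMap.ext
  intro v
  rw [Module.End.mul_apply, Module.End.one_apply]
  rw [sig_apply M a (sig M a v), fLin_sig]
  rw [sig_apply]
  simp
  try module

/-- The 2×2 matrix of `σ_a σ_b` on the span of `α_a, α_b`. -/
def Tmat (q : ℝ) : Matrix (Fin 2) (Fin 2) ℝ := !![4*q^2 - 1, 2*q; -2*q, -1]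

lemma sig_pair_single (a b : B) (hab : a ≠ b) (w : B → ℝ) (hwa : fLin M a w = 0)
    (hwb : fLin M b w = 0) (x y : ℝ) :
    (sig M a * sig M b) (w + x • alphaV a + y • alphaV b)
      = w + ((Tmat (kcos M a b)).mulVec ![x, y] 0) • alphaV a
          + ((Tmat (kcos M a b)).mulVec ![x, y] 1) • alphaV b := by
  set k := kcos M a b with hk
  have hk' : kcos M b a = k := (kcos_symm M a b).symm
  have hm0 : (Tmat k).mulVec ![x, y] 0 = (4*k^2 - 1) * x + 2*k*y := by
    simp [Tmat, Matrix.mulVec, dotProduct, Fin.sum_univ_two]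
    try ring
  have hm1 : (Tmat k).mulVec ![x, y] 1 = -2*k*x - y := by
    simp [Tmat, Matrix.mulVec, dotProduct, Fin.sum_univ_two]
    try ring
  rw [hm0, hm1, Module.End.mul_apply]
  have hb : sig M b (w + x • alphaV a + y • alphaV b)
      = w + x • alphaV a + (-(2*k*x) - y) • alphaV b := by
    rw [sig_apply, map_add, map_add, map_smul, map_smul, hwb, fLin_single, fLin_single,
      kcos_self, hk', smul_eq_mul, smul_eq_mul, mul_one]
    module
  rw [hb]
  rw [sig_apply, map_add, map_add, map_smul, map_smul, hwa, fLin_single, fLin_single,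
    kcos_self, smul_eq_mul, smul_eq_mul, mul_one, ← hk]
  module

lemma sig_pair_pow (a b : B) (hab : a ≠ b) (w : B → ℝ) (hwa : fLin M a w = 0)
    (hwb : fLin M b w = 0) (x y : ℝ) (n : ℕ) :
    ((sig M a * sig M b) ^ n) (w + x • alphaV a + y • alphaV b)
      = w + (((Tmat (kcos M a b)) ^ n).mulVec ![x, y] 0) • alphaV a
          + (((Tmat (kcos M a b)) ^ n).mulVec ![x, y] 1) • alphaV b := by
  induction n generalizing x y with
  | zero => simp
  | succ n ih =>
      rw [pow_succ, Module.End.mul_apply, sig_pair_single M a b hab w hwa hwb x y, ih]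

      have hv : ∀ m : ℕ, ((Tmat (kcos M a b)) ^ m).mulVec
          ((Tmat (kcos M a b)).mulVec ![x, y])
          = ((Tmat (kcos M a b)) ^ (m+1)).mulVec ![x, y] := by
        intro m
        rw [Matrix.mulVec_mulVec, ← pow_succ]
      have hw : ![(Tmat (kcos M a b)).mulVec ![x, y] 0,
          (Tmat (kcos M a b)).mulVec ![x, y] 1] = (Tmat (kcos M a b)).mulVec ![x, y] := by
        funext i
        fin_cases i <;> simp
      rw [hw, hv n]

lemma Tmat_sq (q φ : ℝ) (hφ : Real.cos φ = 2*q^2 - 1) :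
    Tmat q * Tmat q = (2 * Real.cos φ) • Tmat q - 1 := by
  rw [hφ]
  ext i j
  fin_cases i <;> fin_cases j <;>
    simp [Tmat, Matrix.mul_apply, Fin.sum_univ_two, Matrix.one_apply] <;> ring

lemma Tmat_chebyshev (q φ : ℝ) (hφ : Real.cos φ = 2*q^2 - 1) (n : ℕ) :
    Real.sin φ • (Tmat q) ^ (n + 1)
      = Real.sin (((n : ℝ) + 1) * φ) • Tmat q - Real.sin ((n : ℝ) * φ) • 1 := by
  induction n with
  | zero => norm_num
  | succ n ih =>
      have hstep : (Tmat q) ^ (n + 1 + 1) = (Tmat q) ^ (n + 1) * Tmat q := pow_succ _ _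
      have h1 : Real.sin φ • (Tmat q) ^ (n + 1 + 1)
          = (Real.sin φ • (Tmat q) ^ (n + 1)) * Tmat q := by
        rw [hstep, Matrix.smul_mul]
      rw [h1, ih, Matrix.sub_mul, Matrix.smul_mul, Matrix.smul_mul,
        Tmat_sq q φ hφ]
      have htrig : Real.sin (((n : ℝ) + 1 + 1) * φ)
          = 2 * Real.cos φ * Real.sin (((n : ℝ) + 1) * φ) - Real.sin ((n : ℝ) * φ) := by
        have e1 : ((n : ℝ) + 1 + 1) * φ = ((n : ℝ) + 1) * φ + φ := by ring
        have e2 : (n : ℝ) * φ = ((n : ℝ) + 1) * φ - φ := by ring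
        rw [e1, e2, Real.sin_add, Real.sin_sub]
        ring
      push_cast
      rw [htrig]
      ext i j
      simp [Matrix.sub_apply, Matrix.smul_apply, Matrix.one_apply, Matrix.mul_apply,
        Fin.sum_univ_two, smul_eq_mul]
      split_ifs <;> ring

lemma Tmat_pow_eq_one {m : ℕ} (hm : 2 ≤ m) : (Tmat (- Real.cos (Real.pi / m))) ^ m = 1 := by
  set c := Real.cos (Real.pi / m) with hc
  have hq : (2 : ℝ) * c^2 - 1 = Real.cos (2 * (Real.pi / m)) := by
    rw [Real.cos_two_mul]
  rcases eq_or_lt_of_le hm with hm2 | hm3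
  · -- m = 2
    subst hm2
    have : c = 0 := by
      rw [hc]
      norm_num
    rw [this]
    ext i j
    fin_cases i <;> fin_cases j <;>
      simp [Tmat, Matrix.mul_apply, Fin.sum_univ_two, Matrix.one_apply, pow_succ] <;> norm_num
  · -- m ≥ 3
    have hm3' : 3 ≤ m := hm3
    set φ := 2 * (Real.pi / m) with hφdef
    have hφcos : Real.cos φ = 2 * (-c)^2 - 1 := by
      rw [hφdef, ← hq]; ring_nf
    have hmpos : (0:ℝ) < m := by positivity
    have hφpos : 0 < φ := by
      rw [hφdef]; positivity
    have hφlt : φ < Real.pi := by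
      rw [hφdef]
      have hpi := Real.pi_pos
      have hm3R : (2:ℝ) < (m:ℝ) := by exact_mod_cast hm3
      calc 2 * (Real.pi / m) = (2 / m) * Real.pi := by ring
        _ < 1 * Real.pi := by
            apply mul_lt_mul_of_pos_right _ hpi
            rw [div_lt_one hmpos]
            exact hm3R
        _ = Real.pi := one_mul _
    have hsin : Real.sin φ ≠ 0 := ne_of_gt (Real.sin_pos_of_pos_of_lt_pi hφpos hφlt)
    obtain ⟨n, rfl⟩ : ∃ n, m = n + 1 := ⟨m - 1, by omega⟩
    have hcheb := Tmat_chebyshev (-c) φ hφcos n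
    have hn1 : ((n : ℝ) + 1) * φ = 2 * Real.pi := by
      rw [hφdef]
      field_simp
      try ring
      push_cast
      rfl
    have hn0 : (n : ℝ) * φ = 2 * Real.pi - φ := by
      rw [← hn1]; ring
    rw [hn1, hn0, Real.sin_two_pi] at hcheb
    have hsub : Real.sin (2 * Real.pi - φ) = - Real.sin φ := by
      rw [Real.sin_sub, Real.sin_two_pi, Real.cos_two_pi]
      ring
    rw [hsub, zero_smul, zero_sub] at hcheb
    simp only [neg_smul, neg_neg] at hcheb
    exact smul_right_injective _ hsin hcheb


lemma exists_decomp (a b : B) (hD : 1 - (kcos M a b)^2 ≠ 0) (v : B → ℝ) :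
    ∃ (w : B → ℝ) (x y : ℝ), fLin M a w = 0 ∧ fLin M b w = 0
      ∧ v = w + x • alphaV a + y • alphaV b := by
  set k := kcos M a b with hk
  have hk' : kcos M b a = k := (kcos_symm M a b).symm
  refine ⟨v - ((fLin M a v - k * fLin M b v)/(1-k^2)) • alphaV a
      - ((fLin M b v - k * fLin M a v)/(1-k^2)) • alphaV b,
    (fLin M a v - k * fLin M b v)/(1-k^2), (fLin M b v - k * fLin M a v)/(1-k^2),
    ?_, ?_, by module⟩
  · rw [map_sub, map_sub, map_smul, map_smul, fLin_single, fLin_single, kcos_self, ← hk]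
    simp only [smul_eq_mul, mul_one]
    field_simp
    ring
  · rw [map_sub, map_sub, map_smul, map_smul, fLin_single, fLin_single, kcos_self, hk']
    simp only [smul_eq_mul, mul_one]
    field_simp
    ring

lemma sig_liftable : CoxeterMatrix.IsLiftable M (fun a => sig M a) := by
  intro a b
  rcases eq_or_ne a b with rfl | hab
  · rw [M.diagonal, pow_one]
    exact sig_sq M a
  · rcases Nat.eq_zero_or_pos (M a b) with h0 | hpos
    · rw [h0, pow_zero]
    · have hm2 : 2 ≤ M a b := by
        have := M.off_diagonal a b hab
        omega
      have hmR : (2:ℝ) ≤ (M a b : ℝ) := by exact_mod_cast hm2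
      have hpi := Real.pi_pos
      have hmpos : (0:ℝ) < (M a b : ℝ) := by linarith
      have hθpos : 0 < Real.pi / (M a b : ℝ) := by positivity
      have hθlt : Real.pi / (M a b : ℝ) < Real.pi := by
        rw [div_lt_iff₀ hmpos]
        nlinarith
      have hsinpos : 0 < Real.sin (Real.pi / (M a b : ℝ)) :=
        Real.sin_pos_of_pos_of_lt_pi hθpos hθlt
      have hpyth := Real.sin_sq_add_cos_sq (Real.pi / (M a b : ℝ))
      have hkk : kcos M a b = - Real.cos (Real.pi / (M a b : ℝ)) := rfl
      have hD : 1 - (kcos M a b)^2 ≠ 0 := by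
        rw [hkk]
        nlinarith
      apply LinearMap.ext
      intro v
      obtain ⟨w, x, y, hwa, hwb, hv⟩ := exists_decomp M a b hD v
      rw [Module.End.one_apply, hv, sig_pair_pow M a b hab w hwa hwb x y (M a b)]
      rw [show Tmat (kcos M a b) = Tmat (- Real.cos (Real.pi / (M a b : ℝ))) from rfl]
      rw [Tmat_pow_eq_one hm2, Matrix.one_mulVec]
      simp

lemma Tneg1_pow (n : ℕ) :
    (Tmat (-1 : ℝ))^n = !![1+2*(n:ℝ), -(2*(n:ℝ)); 2*(n:ℝ), 1-2*(n:ℝ)] := by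
  induction n with
  | zero =>
      ext i j
      fin_cases i <;> fin_cases j <;> simp [Matrix.one_apply]
  | succ n ih =>
      rw [pow_succ, ih]
      ext i j
      fin_cases i <;> fin_cases j <;>
        (simp [Tmat, Matrix.mul_apply, Fin.sum_univ_two]; push_cast; try ring)

end GeometricRep

/-- In a Coxeter system whose group is finite, all entries of the Coxeter matrix are nonzero. -/
lemma Mne0 {B : Type*} [Fintype B] [DecidableEq B] {M : CoxeterMatrix B}
    {W : Type*} [Group W] [Finite W] (cs : CoxeterSystem M W) (i j : B) : M i j ≠ 0 := by
  intro h0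
  rcases eq_or_ne i j with rfl | hij
  · rw [M.diagonal] at h0
    omega
  · set n := orderOf (cs.simple i * cs.simple j) with hn
    have hnpos : 0 < n := orderOf_pos _
    have hpow : (cs.simple i * cs.simple j) ^ n = 1 := pow_orderOf_eq_one _
    have hρ : (sig M i * sig M j) ^ n = 1 := by
      have hc := congrArg (cs.lift ⟨fun a => sig M a, sig_liftable M⟩) hpow
      rw [map_pow, map_mul, map_one, CoxeterSystem.lift_apply_simple,
        CoxeterSystem.lift_apply_simple] at hc
      exact hc
    have hk : kcos M i j = -1 := by
      rw [kcos, h0]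
      norm_num
    have heval := sig_pair_pow M i j hij 0 (map_zero _) (map_zero _) 0 1 n
    rw [hρ, hk, Tneg1_pow, Module.End.one_apply] at heval
    have hm0 : (!![1+2*(n:ℝ), -(2*(n:ℝ)); 2*(n:ℝ), 1-2*(n:ℝ)]).mulVec ![(0:ℝ), 1] 0
        = -(2*(n:ℝ)) := by
      simp [Matrix.mulVec, dotProduct, Fin.sum_univ_two]
    have hm1 : (!![1+2*(n:ℝ), -(2*(n:ℝ)); 2*(n:ℝ), 1-2*(n:ℝ)]).mulVec ![(0:ℝ), 1] 1
        = 1-2*(n:ℝ) := by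
      simp [Matrix.mulVec, dotProduct, Fin.sum_univ_two]
    rw [hm0, hm1] at heval
    have hco := congrFun heval i
    simp [alphaV, Pi.single_apply, hij] at hco
    have hnR : (n:ℝ) = 0 := by linarith
    have hn0 : n = 0 := by exact_mod_cast hnR
    omega

/-- let `(W,S)` be a finite Coxeter system, `I, J ⊆ S` and `s ∈ I ∖ J`.
If some `t ∈ J ∖ I` has `ord(st) = 2` then `X_{IJ}^s = 0` in `Ω(W,S)`; consequently
`X_{IJ}^s ≠ 0` implies that `I ← J` is an edge of the compatibility graph `Q_W`. -/
theorem statement2 {B : Type*} [Fintype B] [DecidableEq B] (M : CoxeterMatrix B)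
    {W : Type*} [Group W] [Finite W] (cs : CoxeterSystem M W)
    (I J : Finset B) (s : B) (hs : s ∈ I \ J) :
    ((∃ t ∈ J \ I, M s t = 2) → XOm ℤ M I J s = 0) ∧
    (XOm ℤ M I J s ≠ 0 → QEdge M I J) := by
  have hs' := hs
  rw [Finset.mem_sdiff] at hs'
  constructor
  · rintro ⟨t, ht, h2⟩
    rw [Finset.mem_sdiff] at ht
    exact XOm_eq_zero_aux M hs'.1 hs'.2 ht.1 ht.2 h2
  · intro hX
    refine ⟨⟨s, hs⟩, ?_⟩
    intro u hu t ht h2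
    apply hX
    rw [Finset.mem_sdiff] at hu ht
    by_cases hsu : s = u
    · subst hsu
      exact XOm_eq_zero_aux M hs'.1 hs'.2 ht.1 ht.2 h2
    · rw [XOm_eq_of_pair M hs'.1 hs'.2 hu.1 hu.2 (Mne0 cs s u)]
      exact XOm_eq_zero_aux M hu.1 hu.2 ht.1 ht.2 h2

end WGraphPaper

end
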